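/- Let R be a commutative Noetherian ring, M a finitely generated R-module, 𝔭 a prime ideal of R, and r a positive integer. Suppose 𝔭 is an associated prime of 𝔭^{r-1}M / 𝔭ʳM, and let N = { x ∈ M : (𝔭ʳM :_R x) ⊄ 𝔭 }. Then N is a proper submodule of M and Ass(M/N) = {𝔭}. -/

import Mathlib

theorem stmt5 {R M : Type*} [CommRing R] [IsNoetherianRing R] [AddCommGroup M]
    [Module R M] [Module.Finite R M] (p : Ideal R) (hp : p.IsPrime)
    (r : ℕ) (hr : 0 < r)
    (hass : p ∈ associatedPrimes R
      (↥(p ^ (r - 1) • ⊤ : Submodule R M) ⧸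
        Submodule.comap (p ^ (r - 1) • ⊤ : Submodule R M).subtype
          (p ^ r • ⊤ : Submodule R M)))
    (N : Submodule R M)
    (hNdef : (N : Set M) =
      {x : M | ¬ Submodule.colon (p ^ r • ⊤ : Submodule R M)
        (Submodule.span R {x}) ≤ p}) :
    N ≠ ⊤ ∧ associatedPrimes R (M ⧸ N) = {p} := by
  have hmemN : ∀ x : M, x ∈ N ↔
      ¬ Submodule.colon (p ^ r • ⊤ : Submodule R M) (Submodule.span R {x}) ≤ p := by
    intro x
    constructor
    · intro h
      have hx : x ∈ (N : Set M) := h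
      rw [hNdef] at hx
      exact hx
    · intro h
      show x ∈ (N : Set M)
      rw [hNdef]
      exact h
  -- elements of p^r • ⊤ belong to N
  have haux : ∀ m : M, m ∈ (p ^ r • ⊤ : Submodule R M) → m ∈ N := by
    intro m hm
    rw [hmemN]
    intro hle
    have h1 : (1 : R) ∈ Submodule.colon (p ^ r • ⊤ : Submodule R M) (Submodule.span R {m}) := by
      rw [Submodule.mem_colon_span_singleton, one_smul]
      exact hm
    exact hp.ne_top (Ideal.eq_top_iff_one p |>.2 (hle h1))
  -- if m ∉ N, then colon(p^r M, m) ≤ p; key step for q ≤ p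
  have hkey : ∀ (m : M) (a : R), (¬ m ∈ N) → a • m ∈ N → a ∈ p := by
    intro m a hm ham
    rw [hmemN] at hm ham
    push_neg at hm
    obtain ⟨b, hb, hbp⟩ := Set.not_subset.1 ham
    rw [SetLike.mem_coe, Submodule.mem_colon_span_singleton] at hb
    have hb' : (b * a) • m ∈ (p ^ r • ⊤ : Submodule R M) := by
      rw [mul_smul]; exact hb
    have : b * a ∈ Submodule.colon (p ^ r • ⊤ : Submodule R M) (Submodule.span R {m}) := by
      rw [Submodule.mem_colon_span_singleton]; exact hb'
    have := hm this
    rcases hp.mem_or_mem this with h | h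
    · exact absurd h hbp
    · exact h
  -- extract witness from hass
  obtain ⟨hp', z, hz⟩ := isAssociatedPrime_iff.mp hass
  obtain ⟨y, rfl⟩ := Submodule.Quotient.mk_surjective _ z
  set x : M := (y : M) with hxdef
  have hxcolon : Submodule.colon (p ^ r • ⊤ : Submodule R M) (Submodule.span R {x}) = p := by
    ext a
    rw [Submodule.mem_colon_span_singleton]
    constructor
    · intro ha
      rw [hz, Submodule.mem_colon_singleton, Submodule.mem_bot,
        ← Submodule.Quotient.mk_smul, Submodule.Quotient.mk_eq_zero]
      exact ha
    · intro ha
      rw [hz, Submodule.mem_colon_singleton, Submodule.mem_bot,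
        ← Submodule.Quotient.mk_smul, Submodule.Quotient.mk_eq_zero] at ha
      exact ha
  have hxN : x ∉ N := by
    rw [hmemN, hxcolon]
    exact fun h => h le_rfl
  constructor
  · intro h
    exact hxN (h ▸ Submodule.mem_top)
  · ext q
    simp only [Set.mem_singleton_iff]
    constructor
    · intro hqa
      obtain ⟨hq, w, hw⟩ := isAssociatedPrime_iff.mp hqa
      obtain ⟨m, rfl⟩ := Submodule.Quotient.mk_surjective _ w
      have hmN : m ∉ N := by
        intro hm
        apply hq.ne_top
        rw [hw, Ideal.eq_top_iff_one, Submodule.mem_colon_singleton, Submodule.mem_bot, one_smul,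
          Submodule.Quotient.mk_eq_zero]
        exact hm
      have hqp : q ≤ p := by
        intro a ha
        rw [hw, Submodule.mem_colon_singleton, Submodule.mem_bot,
          ← Submodule.Quotient.mk_smul, Submodule.Quotient.mk_eq_zero] at ha
        exact hkey m a hmN ha
      have hpq : p ≤ q := by
        have hpr : p ^ r ≤ q := by
          intro a ha
          rw [hw, Submodule.mem_colon_singleton, Submodule.mem_bot,
            ← Submodule.Quotient.mk_smul, Submodule.Quotient.mk_eq_zero]
          exact haux _ (Submodule.smul_mem_smul ha Submodule.mem_top)
        exact hq.le_of_pow_le hpr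
      exact le_antisymm hqp hpq
    · rintro rfl
      refine isAssociatedPrime_iff.mpr ⟨hp, Submodule.Quotient.mk x, ?_⟩
      ext a
      rw [Submodule.mem_colon_singleton, Submodule.mem_bot, ← Submodule.Quotient.mk_smul,
        Submodule.Quotient.mk_eq_zero]
      constructor
      · intro ha
        apply haux
        rw [← hxcolon] at ha
        rw [Submodule.mem_colon_span_singleton] at ha
        exact ha
      · intro ha
        exact hkey x a hxN ha
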